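/- Let a₁ < … < a_N be positive integers and w₁, …, w_N strictly positive reals. Define the sequence g by g₀ = 1, g_j = 0 for the a_N − 1 'negative' initial positions (i.e., extend g by zero to negative indices), and g_k = ∑_{i=1}^N w_i g_{k-a_i} for k > 0. Then the set {k ∈ ℕ : g_k = 0} equals exactly the set of gaps of the numerical semigroup ⟨a₁, …, a_N⟩. -/
import Mathlib


theorem stmt_10 (N : ℕ) (a : Fin (N + 1) → ℕ) (w : Fin (N + 1) → ℝ)
    (ha : StrictMono a) (hapos : ∀ i, 0 < a i) (hw : ∀ i, 0 < w i)
    (g : ℤ → ℝ)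
    (hneg : ∀ j : ℤ, j < 0 → g j = 0)
    (h0 : g 0 = 1)
    (hrec : ∀ k : ℤ, 1 ≤ k → g k = ∑ i, w i * g (k - (a i : ℤ))) :
    {k : ℕ | g (k : ℤ) = 0} =
      {k : ℕ | ¬ ∃ n : Fin (N + 1) → ℕ, k = ∑ i, n i * a i} := by
  have key : ∀ k : ℕ, 0 ≤ g (k : ℤ) ∧
      (0 < g (k : ℤ) ↔ ∃ n : Fin (N + 1) → ℕ, k = ∑ i, n i * a i) := by
    intro k
    induction k using Nat.strong_induction_on with
    | _ k ih =>
      rcases Nat.eq_zero_or_pos k with rfl | hk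
      · refine ⟨by simp [h0], ⟨fun _ => ⟨0, by simp⟩, fun _ => by simp [h0]⟩⟩
      · have hrk := hrec k (by exact_mod_cast hk)
        have hcast : ∀ i : Fin (N + 1), a i ≤ k →
            (k : ℤ) - (a i : ℤ) = ((k - a i : ℕ) : ℤ) := by
          intro i h
          have := Nat.cast_sub (R := ℤ) h
          omega
        have hzero : ∀ i : Fin (N + 1), k < a i → g ((k : ℤ) - (a i : ℤ)) = 0 := by
          intro i h
          apply hneg
          have : (k : ℤ) < (a i : ℤ) := by exact_mod_cast h
          omega
        have hterm : ∀ i, 0 ≤ w i * g ((k : ℤ) - (a i : ℤ)) := by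
          intro i
          rcases lt_or_ge k (a i) with h | h
          · rw [hzero i h]; simp
          · rw [hcast i h]
            exact mul_nonneg (hw i).le (ih (k - a i) (by have := hapos i; omega)).1
        have hnn : 0 ≤ g (k : ℤ) := hrk ▸ Finset.sum_nonneg fun i _ => hterm i
        refine ⟨hnn, ?_, ?_⟩
        · intro hpos
          rw [hrk] at hpos
          have hex : ∃ i : Fin (N + 1), 0 < w i * g ((k : ℤ) - (a i : ℤ)) := by
            by_contra hcon
            push_neg at hcon
            have : (∑ i, w i * g ((k : ℤ) - (a i : ℤ))) ≤ 0 :=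
              Finset.sum_nonpos fun i _ => hcon i
            linarith
          obtain ⟨i, hi⟩ := hex
          have hgpos : 0 < g ((k : ℤ) - (a i : ℤ)) := by
            by_contra hle
            push_neg at hle
            nlinarith [hw i]
          have hle : a i ≤ k := by
            by_contra hlt
            push_neg at hlt
            rw [hzero i hlt] at hgpos
            exact lt_irrefl 0 hgpos
          rw [hcast i hle] at hgpos
          obtain ⟨n, hn⟩ := ((ih (k - a i) (by have := hapos i; omega)).2).1 hgpos
          refine ⟨fun j => n j + if j = i then 1 else 0, ?_⟩
          have hs : ∑ j, (n j + if j = i then 1 else 0) * a j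
              = (∑ j, n j * a j) + a i := by
            simp [add_mul, Finset.sum_add_distrib, ite_mul]
          rw [hs, ← hn]
          omega
        · rintro ⟨n, hn⟩
          have hiex : ∃ i, 0 < n i := by
            by_contra hcon
            push_neg at hcon
            simp only [Nat.le_zero] at hcon
            have : k = 0 := by
              rw [hn]
              exact Finset.sum_eq_zero fun i _ => by rw [hcon i]; simp
            omega
          obtain ⟨i, hni⟩ := hiex
          set n' : Fin (N + 1) → ℕ := fun j => if j = i then n i - 1 else n j with hn'
          have hsum : ∑ j, n j * a j = (∑ j, n' j * a j) + a i := by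
            have hterm' : ∀ j, n j * a j = n' j * a j + if j = i then a j else 0 := by
              intro j
              by_cases h : j = i
              · subst h
                simp only [hn', if_pos rfl, if_true, eq_self_iff_true]
                rw [Nat.sub_one_mul]
                have := Nat.le_mul_of_pos_left (a j) hni
                omega
              · simp [hn', h]
            calc ∑ j, n j * a j = ∑ j, (n' j * a j + if j = i then a j else 0) :=
                  Finset.sum_congr rfl fun j _ => hterm' j
              _ = (∑ j, n' j * a j) + a i := by
                  rw [Finset.sum_add_distrib]
                  simp
          have hrep : k - a i = ∑ j, n' j * a j := by omega
          have hle : a i ≤ k := by omega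
          have hgpos : 0 < g ((k : ℤ) - (a i : ℤ)) := by
            rw [hcast i hle]
            exact ((ih (k - a i) (by have := hapos i; omega)).2).2 ⟨n', hrep⟩
          have hsingle : w i * g ((k : ℤ) - (a i : ℤ)) ≤ g (k : ℤ) := by
            rw [hrk]
            exact Finset.single_le_sum (fun j _ => hterm j) (Finset.mem_univ i)
          have : 0 < w i * g ((k : ℤ) - (a i : ℤ)) := mul_pos (hw i) hgpos
          linarith
  ext k
  simp only [Set.mem_setOf_eq]
  obtain ⟨hnn, hiff⟩ := key k
  constructor
  · intro h0k hex
    have := hiff.2 hex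
    linarith
  · intro hne
    by_contra hne0
    exact hne (hiff.1 (lt_of_le_of_ne hnn (Ne.symm hne0)))
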